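/- Let G be a finite supersolvable group and p a prime. Then G/F_p(G) is abelian of exponent dividing p−1, where F_p(G) is the p-nilpotent radical of G. -/

import Mathlib

/-- A group is supersolvable if it has a normal series `1 = H 0 ≤ ⋯ ≤ H n = G`
with each term normal in `G` and each successive quotient cyclic. -/
def IsSupersolvable (G : Type*) [Group G] : Prop :=
  ∃ (n : ℕ) (c : Fin (n + 1) → Subgroup G),
    c 0 = ⊥ ∧ c (Fin.last n) = ⊤ ∧ (∀ i, (c i).Normal) ∧
    ∀ i : Fin n, ∃ x : G, c i.succ = c i.castSucc ⊔ Subgroup.closure {x}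

/-- A finite group is `p`-nilpotent if it has a normal `p`-complement: a normal
subgroup of order coprime to `p` whose index is a power of `p`. -/
def IsPNilpotent (p : ℕ) (G : Type*) [Group G] : Prop :=
  ∃ K : Subgroup G, K.Normal ∧ Nat.Coprime p (Nat.card K) ∧ ∃ n : ℕ, K.index = p ^ n

/-- The `p`-nilpotent radical `F_p(G)`: the subgroup generated by (i.e. the join of)
all normal `p`-nilpotent subgroups of `G`. -/
def pNilpotentRadical (p : ℕ) (G : Type*) [Group G] : Subgroup G :=
  ⨆ (N : Subgroup G) (_ : N.Normal ∧ IsPNilpotent p ↥N), N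

open scoped commutatorElement

open Subgroup


lemma isSupersolvable_of_surjective {G H : Type*} [Group G] [Group H] (f : G →* H)
    (hf : Function.Surjective f) (h : IsSupersolvable G) : IsSupersolvable H := by
  obtain ⟨n, c, h0, hl, hn, hs⟩ := h
  refine ⟨n, fun i => (c i).map f, by show map f (c 0) = ⊥; rw [h0]; exact Subgroup.map_bot f,
    by show map f (c (Fin.last n)) = ⊤; rw [hl]; exact Subgroup.map_top_of_surjective f hf,
    fun i => Subgroup.Normal.map (hn i) f hf, fun i => ?_⟩
  obtain ⟨x, hx⟩ := hs i
  exact ⟨f x, by show map f (c i.succ) = map f (c i.castSucc) ⊔ _; rw [hx, Subgroup.map_sup, MonoidHom.map_closure, Set.image_singleton]⟩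

lemma pnil_of_injective {p : ℕ} (hp : p.Prime) {H G : Type*} [Group H] [Group G] (f : H →* G)
    (hf : Function.Injective f) (h : IsPNilpotent p G) : IsPNilpotent p H := by
  obtain ⟨K, hKn, hKc, m, hKi⟩ := h
  refine ⟨K.comap f, hKn.comap f, ?_, ?_⟩
  · have hd : Nat.card (K.comap f) ∣ Nat.card K := by
      rw [Nat.card_congr (Subgroup.equivMapOfInjective (K.comap f) f hf).toEquiv]
      exact Subgroup.card_dvd_of_le (Subgroup.map_comap_le f K)
    exact Nat.Coprime.coprime_dvd_right hd hKc
  · have h1 : (K.comap f).index ∣ K.index := by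
      rw [Subgroup.index_comap]
      exact Subgroup.relIndex_dvd_index_of_normal K f.range
    obtain ⟨k, -, hk⟩ := (Nat.dvd_prime_pow hp).mp (hKi ▸ h1)
    exact ⟨k, hk⟩

/-- restriction of a surjective hom to the preimage of a subgroup, as a hom onto it -/
private def resHom {H G : Type*} [Group H] [Group G] (f : H →* G) (Kb : Subgroup G) :
    ↥(Kb.comap f) →* ↥Kb :=
  (f.domRestrict (Kb.comap f)).codRestrict Kb fun x => x.2

private lemma resHom_surjective {H G : Type*} [Group H] [Group G] (f : H →* G)
    (hf : Function.Surjective f) (Kb : Subgroup G) : Function.Surjective (resHom f Kb) := by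
  rintro ⟨b, hb⟩
  obtain ⟨g, rfl⟩ := hf b
  exact ⟨⟨g, hb⟩, rfl⟩

private lemma resHom_ker {H G : Type*} [Group H] [Group G] (f : H →* G) (Kb : Subgroup G) :
    (resHom f Kb).ker = f.ker.subgroupOf (Kb.comap f) := by
  ext x
  simp [resHom, MonoidHom.mem_ker, Subgroup.mem_subgroupOf, Subtype.ext_iff,
    MonoidHom.codRestrict, MonoidHom.domRestrict]

lemma pnil_of_surjective_coprime {p : ℕ} (hp : p.Prime) {H G : Type*} [Group H] [Group G]
    [Finite H] (f : H →* G) (hf : Function.Surjective f) (hker : ¬ p ∣ Nat.card f.ker)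
    (h : IsPNilpotent p G) : IsPNilpotent p H := by
  have : Fact p.Prime := ⟨hp⟩
  obtain ⟨Kb, hKbn, hKbc, m, hKbi⟩ := h
  set K : Subgroup H := Kb.comap f with hK
  refine ⟨K, hKbn.comap f, ?_, m, by rw [hK, Subgroup.index_comap_of_surjective _ hf, hKbi]⟩
  rw [hp.coprime_iff_not_dvd]
  intro hd
  obtain ⟨x, hx⟩ := exists_prime_orderOf_dvd_card' (G := ↥K) p hd
  have hx' : orderOf (resHom f Kb x) ∣ p := hx ▸ orderOf_map_dvd (resHom f Kb) x
  rcases (Nat.dvd_prime hp).mp hx' with h1 | h1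
  · have hxk : x ∈ (resHom f Kb).ker := orderOf_eq_one_iff.mp h1
    rw [resHom_ker] at hxk
    have : orderOf (x : H) ∣ Nat.card f.ker :=
      Subgroup.orderOf_dvd_natCard f.ker hxk
    rw [orderOf_coe, hx] at this
    exact hker this
  · have : p ∣ Nat.card Kb := h1 ▸ orderOf_dvd_natCard (resHom f Kb x)
    exact (hp.coprime_iff_not_dvd.mp hKbc) this

lemma pnil_of_surjective_central {p : ℕ} (hp : p.Prime) {H G : Type*} [Group H] [Group G]
    [Finite H] (f : H →* G) (hf : Function.Surjective f) (hker : Nat.card f.ker = p)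
    (hcent : f.ker ≤ Subgroup.center H) (h : IsPNilpotent p G) : IsPNilpotent p H := by
  obtain ⟨Kb, hKbn, hKbc, m, hKbi⟩ := h
  set K : Subgroup H := Kb.comap f with hKdef
  have hKn : K.Normal := hKbn.comap f
  have hKi : K.index = p ^ m := by rw [hKdef, Subgroup.index_comap_of_surjective _ hf, hKbi]
  have hkerK : f.ker ≤ K := fun x hx => by
    simp only [hKdef, Subgroup.mem_comap, MonoidHom.mem_ker.mp hx, one_mem]
  have hG : Finite G := Finite.of_surjective f hf
  have hcardK : Nat.card ↥K = Nat.card Kb * p := by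
    have e1 := QuotientGroup.quotientKerEquivOfSurjective _ (resHom_surjective f hf Kb)
    have h2 := Subgroup.card_eq_card_quotient_mul_card_subgroup (resHom f Kb).ker
    rw [Nat.card_congr e1.toEquiv] at h2
    rw [h2, resHom_ker]
    congr 1
    rw [Nat.card_congr (Subgroup.subgroupOfEquivOfLe hkerK).toEquiv, hker]
  set Z : Subgroup ↥K := f.ker.subgroupOf K with hZdef
  have hZcard : Nat.card Z = p := by
    rw [hZdef, Nat.card_congr (Subgroup.subgroupOfEquivOfLe hkerK).toEquiv, hker]
  have hZcent : ∀ z : ↥K, z ∈ Z → ∀ w : ↥K, w * z = z * w := by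
    intro z hz w
    exact Subtype.ext (Subgroup.mem_center_iff.mp (hcent hz) (w : H))
  haveI hZn : Z.Normal := ⟨fun z hz g => by
    have h1 : g * z * g⁻¹ = z := by rw [hZcent z hz g]; group
    rw [h1]; exact hz⟩
  have hZi : Nat.card Z * Z.index = Nat.card ↥K := Subgroup.card_mul_index Z
  have hZindex : Z.index = Nat.card Kb := by
    apply Nat.eq_of_mul_eq_mul_left hp.pos
    rw [← hZcard, hZi, hcardK, mul_comm (Nat.card Kb) p, hZcard]
  have hcop : Nat.Coprime (Nat.card Z) Z.index := by rw [hZcard, hZindex]; exact hKbc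
  obtain ⟨Q, hQ⟩ := Subgroup.exists_right_complement'_of_coprime hcop
  have hQcard : Nat.card Q = Nat.card Kb := by
    apply Nat.eq_of_mul_eq_mul_left hp.pos
    have := hQ.card_mul
    rw [hZcard] at this
    rw [this, hcardK, mul_comm]
  set QH : Subgroup H := Q.map K.subtype with hQHdef
  have hQHcard : Nat.card QH = Nat.card Kb := by
    rw [hQHdef, Nat.card_congr (Subgroup.equivMapOfInjective Q K.subtype
      K.subtype_injective).symm.toEquiv, hQcard]
  have hQHleK : ∀ z : H, z ∈ QH → z ∈ K := by
    rintro z ⟨w, hw, rfl⟩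
    exact w.2
  -- characterization : elements of K lying in QH are exactly those of p'-order
  have hchar : ∀ z : H, z ∈ K → (z ∈ QH ↔ ¬ p ∣ orderOf z) := by
    intro z hzK
    constructor
    · rintro ⟨w, hw, rfl⟩ hdvd
      have h1 : orderOf (K.subtype w) = orderOf w := orderOf_coe w
      have h2 : orderOf w ∣ Nat.card Q := Subgroup.orderOf_dvd_natCard Q hw
      rw [h1] at hdvd
      exact (hp.coprime_iff_not_dvd.mp (hQcard ▸ hKbc)) (hdvd.trans h2)
    · intro hnd
      set w : ↥K := ⟨z, hzK⟩ with hwdef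
      obtain ⟨⟨a, u⟩, hau⟩ := (hQ.existsUnique w).exists
      -- a : ↥(Z : Set ↥K), u : ↥(Q : Set ↥K)
      have hcomm : Commute (a : ↥K) (u : ↥K) := (hZcent a a.2 u).symm
      have hord : orderOf w = orderOf z := (orderOf_coe w).symm
      have hwm : ((a : ↥K) * (u : ↥K)) ^ orderOf w = 1 := by
        rw [show (a : ↥K) * (u : ↥K) = w from hau]; exact pow_orderOf_eq_one w
      rw [hcomm.mul_pow] at hwm
      have hmem : ((a : ↥K) ^ orderOf w) ∈ Z ⊓ Q := by
        constructor
        · exact Z.pow_mem a.2 _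
        · have : (a : ↥K) ^ orderOf w = ((u : ↥K) ^ orderOf w)⁻¹ := by
            rw [eq_inv_iff_mul_eq_one]; exact hwm
          rw [this]; exact Q.inv_mem (Q.pow_mem u.2 _)
      rw [hQ.isCompl.inf_eq_bot, Subgroup.mem_bot] at hmem
      have hao : orderOf (a : ↥K) ∣ orderOf w := orderOf_dvd_of_pow_eq_one hmem
      have hap : orderOf (a : ↥K) ∣ p := by
        rw [← hZcard]; exact Subgroup.orderOf_dvd_natCard Z a.2
      have ha1 : (a : ↥K) = 1 := by
        rcases (Nat.dvd_prime hp).mp hap with h1 | h1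
        · exact orderOf_eq_one_iff.mp h1
        · exact absurd (h1 ▸ hao) (by rw [hord]; exact hnd)
      have : w ∈ Q := by rw [← hau, ha1, one_mul]; exact u.2
      exact ⟨w, this, rfl⟩
  haveI : QH.Normal := by
    constructor
    intro z hz g
    have hzK : z ∈ K := hQHleK z hz
    have h1 : g * z * g⁻¹ ∈ K := hKn.conj_mem z hzK g
    have horder : orderOf (g * z * g⁻¹) = orderOf z := (MulAut.conj g).orderOf_eq z
    rw [hchar _ h1, horder]
    exact (hchar z hzK).mp hz
  refine ⟨QH, this, ?_, m + 1, ?_⟩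
  · rw [hQHcard]; exact hKbc
  · have h1 : Nat.card QH * QH.index = Nat.card H := Subgroup.card_mul_index QH
    have h2 : Nat.card ↥K * K.index = Nat.card H := Subgroup.card_mul_index K
    have hKb0 : 0 < Nat.card Kb := Nat.card_pos
    apply Nat.eq_of_mul_eq_mul_left hKb0
    rw [← hQHcard, h1, ← h2, hcardK, hKi, hQHcard]
    ring

lemma exists_prime_order_normal {G : Type*} [Group G] [Finite G] (hG : IsSupersolvable G)
    (hnt : ∃ x : G, x ≠ 1) :
    ∃ y : G, (orderOf y).Prime ∧ (Subgroup.zpowers y).Normal := by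
  obtain ⟨n, c, h0, hl, hn, hs⟩ := hG
  have key : ∀ j : Fin (n + 1), c j = ⊥ ∨ ∃ i : Fin n, c i.castSucc = ⊥ ∧ c i.succ ≠ ⊥ := by
    intro j
    induction j using Fin.induction with
    | zero => exact Or.inl h0
    | succ i ih =>
      by_cases h : c i.succ = ⊥
      · exact Or.inl h
      · rcases ih with h' | h'
        · exact Or.inr ⟨i, h', h⟩
        · exact Or.inr h'
  obtain ⟨x, hx1⟩ := hnt
  have htopne : c (Fin.last n) ≠ ⊥ := by
    rw [hl]; intro h; exact hx1 (Subgroup.mem_bot.mp (h ▸ Subgroup.mem_top x))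
  rcases key (Fin.last n) with h | ⟨i, hbot, hne⟩
  · exact absurd h htopne
  obtain ⟨g, hg⟩ := hs i
  have hcs : c i.succ = Subgroup.zpowers g := by
    rw [hg, hbot, bot_sup_eq, Subgroup.zpowers_eq_closure]
  have hgne : g ≠ 1 := by
    intro h; apply hne; rw [hcs]; exact Subgroup.zpowers_eq_bot.mpr h
  have hnorm : (Subgroup.zpowers g).Normal := hcs ▸ hn i.succ
  have hno1 : orderOf g ≠ 1 := by simpa using hgne
  have hn0 : orderOf g ≠ 0 := by
    have : 0 < orderOf g := orderOf_pos g
    omega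
  set q := (orderOf g).minFac with hqdef
  have hq : q.Prime := Nat.minFac_prime hno1
  have hqd : q ∣ orderOf g := Nat.minFac_dvd _
  set y := g ^ (orderOf g / q) with hy
  have hoy : orderOf y = q := by
    rw [hy, orderOf_pow, Nat.gcd_eq_right (Nat.div_dvd_of_dvd hqd)]
    exact Nat.div_div_self hqd hn0
  have hyg : y ∈ Subgroup.zpowers g := ⟨((orderOf g / q : ℕ) : ℤ), by show g ^ ((orderOf g / q : ℕ) : ℤ) = y; rw [zpow_natCast]⟩
  have hle : Subgroup.zpowers y ≤ Subgroup.zpowers g := Subgroup.zpowers_le.mpr hyg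
  have hsub : ∀ z : G, z ∈ Subgroup.zpowers g → z ^ q = 1 → z ∈ Subgroup.zpowers y := by
    intro z hz hzq
    obtain ⟨k, hk⟩ := Subgroup.mem_zpowers_iff.mp hz
    have h1 : g ^ (k * q) = 1 := by
      rw [zpow_mul, hk, zpow_natCast, hzq]
    have h2 : (orderOf g : ℤ) ∣ k * q := orderOf_dvd_iff_zpow_eq_one.mpr h1
    have h3 : ((orderOf g / q : ℕ) : ℤ) ∣ k := by
      have hq0 : (q : ℤ) ≠ 0 := Int.natCast_ne_zero.mpr hq.ne_zero
      rw [show (orderOf g : ℤ) = ((orderOf g / q : ℕ) : ℤ) * q by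
        exact_mod_cast (Nat.div_mul_cancel hqd).symm] at h2
      exact (mul_dvd_mul_iff_right hq0).mp h2
    obtain ⟨t, ht⟩ := h3
    refine Subgroup.mem_zpowers_iff.mpr ⟨t, ?_⟩
    rw [hy, ← zpow_natCast g, ← zpow_mul, ← ht, hk]
  have hpowq : ∀ z : G, z ∈ Subgroup.zpowers y → z ^ q = 1 := by
    intro z hz
    obtain ⟨j, hj⟩ := Subgroup.mem_zpowers_iff.mp hz
    rw [← hj, ← zpow_natCast, ← zpow_mul, mul_comm, zpow_mul, zpow_natCast,
      ← hoy, pow_orderOf_eq_one, one_zpow]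
  refine ⟨y, hoy ▸ hq, ?_⟩
  constructor
  intro z hz w
  exact hsub _ (hnorm.conj_mem z (hle hz) w)
    (by rw [conj_pow, hpowq z hz, mul_one, mul_inv_cancel])

lemma centralizer_normal_of_zpowers_normal {G : Type*} [Group G] {y : G}
    (hyn : (Subgroup.zpowers y).Normal) : (Subgroup.centralizer {y}).Normal := by
  constructor
  intro c hc g
  rw [Subgroup.mem_centralizer_iff] at hc ⊢
  intro h hh
  rw [Set.mem_singleton_iff] at hh
  rw [hh]
  obtain ⟨j, hj⟩ := Subgroup.mem_zpowers_iff.mp (hyn.conj_mem y (Subgroup.mem_zpowers y) g⁻¹)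
  have hy' : g * y ^ j * g⁻¹ = y := by rw [hj]; group
  have hcy : Commute y c := hc y rfl
  have hcyj : y ^ j * c = c * y ^ j := (hcy.zpow_left j)
  calc y * (g * c * g⁻¹) = (g * y ^ j * g⁻¹) * (g * c * g⁻¹) := by rw [hy']
    _ = g * (y ^ j * c) * g⁻¹ := by group
    _ = g * (c * y ^ j) * g⁻¹ := by rw [hcyj]
    _ = (g * c * g⁻¹) * (g * y ^ j * g⁻¹) := by group
    _ = (g * c * g⁻¹) * y := by rw [hy']

lemma commutator_and_pow_mem_centralizer {G : Type*} [Group G] {p : ℕ} (hp : p.Prime)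
    {y : G} (hy : orderOf y = p) (hyn : (Subgroup.zpowers y).Normal) :
    (∀ a b : G, ⁅a, b⁆ ∈ Subgroup.centralizer {y}) ∧
      ∀ a : G, a ^ (p - 1) ∈ Subgroup.centralizer {y} := by
  haveI : Fact p.Prime := ⟨hp⟩
  have hconj : ∀ g : G, ∃ m : ℤ, y ^ m = g * y * g⁻¹ := fun g =>
    Subgroup.mem_zpowers_iff.mp (hyn.conj_mem y (Subgroup.mem_zpowers y) g)
  choose k hk using hconj
  have key : ∀ a b : ℤ, y ^ a = y ^ b ↔ ((a : ZMod p) = (b : ZMod p)) := by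
    intro a b
    rw [show (y ^ a = y ^ b) ↔ y ^ (a - b) = 1 by
        rw [zpow_sub, mul_inv_eq_one],
      ← orderOf_dvd_iff_zpow_eq_one, hy, ZMod.intCast_eq_intCast_iff, Int.modEq_iff_dvd]
    exact dvd_sub_comm
  have hmul : ∀ a b : G, ((k (a * b) : ℤ) : ZMod p) = ((k a : ℤ) : ZMod p) * ((k b : ℤ) : ZMod p) := by
    intro a b
    have h1 : y ^ (k a * k b) = (a * b) * y * (a * b)⁻¹ := by
      rw [zpow_mul, hk a, conj_zpow, hk b]
      group
    have h2 : y ^ k (a * b) = y ^ (k a * k b) := by rw [hk, h1]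
    have := (key _ _).mp h2
    push_cast at this
    exact this
  have hone : ((k (1 : G) : ℤ) : ZMod p) = 1 := by
    have h2 : y ^ k (1 : G) = y ^ (1 : ℤ) := by rw [hk]; group
    have := (key _ _).mp h2
    rwa [Int.cast_one] at this
  have hinv : ∀ a : G, ((k a : ℤ) : ZMod p) * ((k a⁻¹ : ℤ) : ZMod p) = 1 := by
    intro a
    rw [← hmul]
    rw [show a * a⁻¹ = 1 by group]
    exact hone
  set u : G → (ZMod p)ˣ := fun a => Units.mkOfMulEqOne _ _ (hinv a) with hudef
  have huval : ∀ a : G, ((u a : (ZMod p)ˣ) : ZMod p) = ((k a : ℤ) : ZMod p) := fun a => rfl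
  set U : G →* (ZMod p)ˣ := MonoidHom.mk' u
    (fun a b => Units.ext (by rw [Units.val_mul, huval, huval, huval, hmul])) with hUdef
  have hcent : ∀ g : G, U g = 1 → g ∈ Subgroup.centralizer {y} := by
    intro g hg
    have h1 : ((k g : ℤ) : ZMod p) = ((1 : ℤ) : ZMod p) := by
      rw [← huval g, show u g = U g from rfl, hg]; simp
    have h2 : y ^ k g = y ^ (1 : ℤ) := (key _ _).mpr h1
    rw [hk g, zpow_one] at h2
    rw [Subgroup.mem_centralizer_iff]
    intro h hh
    rw [Set.mem_singleton_iff] at hh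
    rw [hh]
    have : g * y = y * g := by
      calc g * y = (g * y * g⁻¹) * g := by group
        _ = y * g := by rw [h2]
    exact this.symm
  have hcardU : Fintype.card (ZMod p)ˣ = p - 1 := by
    rw [ZMod.card_units_eq_totient, Nat.totient_prime hp]
  constructor
  · intro a b
    apply hcent
    rw [map_commutatorElement]
    exact commutatorElement_eq_one_iff_commute.mpr (Commute.all _ _)
  · intro a
    apply hcent
    rw [map_pow, ← hcardU]
    exact pow_card_eq_one

universe u

lemma main_induction (p : ℕ) (hp : p.Prime) :
    ∀ (n : ℕ) (G : Type u) [Group G] [Finite G],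
      Nat.card G ≤ n → IsSupersolvable G →
      ∃ N : Subgroup G, N.Normal ∧ IsPNilpotent p ↥N ∧
        (∀ x y : G, ⁅x, y⁆ ∈ N) ∧ ∀ x : G, x ^ (p - 1) ∈ N := by
  intro n
  induction n with
  | zero =>
    intro G _ _ hc _
    have := Nat.card_pos (α := G)
    omega
  | succ n IH =>
    intro G _ _ hc hss
    by_cases hnt : ∃ x : G, x ≠ 1
    · obtain ⟨y, hq, hyn⟩ := exists_prime_order_normal hss hnt
      set q := orderOf y with hqdef
      set A : Subgroup G := Subgroup.zpowers y with hA
      have hAcard : Nat.card A = q := Nat.card_zpowers y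
      set f := QuotientGroup.mk' A with hf
      have hfs : Function.Surjective f := QuotientGroup.mk'_surjective A
      have hker : f.ker = A := QuotientGroup.ker_mk' A
      have hGA : Nat.card (G ⧸ A) ≤ n := by
        have h1 : Nat.card A * A.index = Nat.card G := Subgroup.card_mul_index A
        have h2 : A.index = Nat.card (G ⧸ A) := Subgroup.index_eq_card A
        have h3 : A.index ≠ 0 := Subgroup.index_ne_zero_of_finite
        have hq2 : 2 ≤ q := hq.two_le
        rw [hAcard] at h1
        have h4 : 2 * A.index ≤ Nat.card G := by
          rw [← h1]; exact Nat.mul_le_mul_right _ hq2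
        omega
      obtain ⟨Nb, hNbn, hNbpn, hNbc, hNbp⟩ :=
        IH (G ⧸ A) hGA (isSupersolvable_of_surjective f hfs hss)
      set M : Subgroup G := Nb.comap f with hM
      have hMn : M.Normal := hNbn.comap f
      have hAM : A ≤ M := by
        intro a ha
        have h1 : f a = 1 := MonoidHom.mem_ker.mp (show a ∈ f.ker by rw [hker]; exact ha)
        simp only [hM, Subgroup.mem_comap, h1, one_mem]
      have hMc : ∀ a b : G, ⁅a, b⁆ ∈ M := fun a b => by
        rw [Subgroup.mem_comap, map_commutatorElement]; exact hNbc _ _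
      have hMp : ∀ a : G, a ^ (p - 1) ∈ M := fun a => by
        rw [Subgroup.mem_comap, map_pow]; exact hNbp _
      by_cases hqp : q = p
      · -- q = p : intersect with centralizer of y
        have hyp : orderOf y = p := hqdef ▸ hqp
        obtain ⟨hcc, hcp⟩ := commutator_and_pow_mem_centralizer hp hyp hyn
        set C : Subgroup G := Subgroup.centralizer {y} with hC
        have hCn : C.Normal := centralizer_normal_of_zpowers_normal hyn
        set N : Subgroup G := M ⊓ C with hN
        have hNn : N.Normal :=
          ⟨fun x hx g => Subgroup.mem_inf.mpr
            ⟨hMn.conj_mem x (Subgroup.mem_inf.mp hx).1 g,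
              hCn.conj_mem x (Subgroup.mem_inf.mp hx).2 g⟩⟩
        have hAC : A ≤ C := Subgroup.zpowers_le.mpr
          (Subgroup.mem_centralizer_iff.mpr (by
            intro h hh
            rw [Set.mem_singleton_iff] at hh
            rw [hh]))
        have hAN : A ≤ N := le_inf hAM hAC
        have hle2 : N.map f ≤ Nb := Subgroup.map_le_iff_le_comap.mpr inf_le_left
        have hpn2 : IsPNilpotent p ↥(N.map f) :=
          pnil_of_injective hp (Subgroup.inclusion hle2) (Subgroup.inclusion_injective hle2)
            hNbpn
        set ψ : ↥N →* ↥(N.map f) :=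
          (f.domRestrict N).codRestrict (N.map f) (fun x => Subgroup.mem_map_of_mem f x.2)
          with hψ
        have hψs : Function.Surjective ψ := by
          rintro ⟨b, hb⟩
          obtain ⟨g, hg, rfl⟩ := hb
          exact ⟨⟨g, hg⟩, rfl⟩
        have hψker : ψ.ker = A.subgroupOf N := by
          ext x
          rw [MonoidHom.mem_ker, Subgroup.mem_subgroupOf]
          rw [show ((x : G) ∈ A) ↔ (x : G) ∈ f.ker from by rw [hker]]
          rw [MonoidHom.mem_ker]
          simp [hψ, MonoidHom.codRestrict, MonoidHom.domRestrict, Subtype.ext_iff]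
        have hψkcard : Nat.card ψ.ker = p := by
          rw [hψker, Nat.card_congr (Subgroup.subgroupOfEquivOfLe hAN).toEquiv, hAcard, hqp]
        have hψcent : ψ.ker ≤ Subgroup.center ↥N := by
          intro z hz
          rw [Subgroup.mem_center_iff]
          intro w
          have hzA : (z : G) ∈ A := by rw [hψker] at hz; exact hz
          obtain ⟨j, hj⟩ := Subgroup.mem_zpowers_iff.mp hzA
          have hwC : (w : G) ∈ C := (Subgroup.mem_inf.mp w.2).2
          have hcy : Commute y (w : G) := Subgroup.mem_centralizer_iff.mp hwC y rfl
          have h5 : (w : G) * z = z * (w : G) := by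
            rw [← hj]; exact ((hcy.zpow_left j).eq).symm
          exact Subtype.ext h5
        exact ⟨N, hNn, pnil_of_surjective_central hp ψ hψs hψkcard hψcent hpn2,
          fun a b => Subgroup.mem_inf.mpr ⟨hMc a b, hcc a b⟩,
          fun a => Subgroup.mem_inf.mpr ⟨hMp a, hcp a⟩⟩
      · -- q ≠ p : the full preimage M works
        set ψ : ↥M →* ↥Nb := resHom f Nb with hψ
        have hnd : ¬ p ∣ Nat.card ψ.ker := by
          rw [hψ, resHom_ker, hker,
            Nat.card_congr (Subgroup.subgroupOfEquivOfLe hAM).toEquiv, hAcard]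
          intro hd
          exact hqp ((Nat.prime_dvd_prime_iff_eq hp hq).mp hd).symm
        exact ⟨M, hMn,
          pnil_of_surjective_coprime hp ψ (resHom_surjective f hfs Nb) hnd hNbpn, hMc, hMp⟩
    · push_neg at hnt
      haveI hs1 : Subsingleton ↥(⊥ : Subgroup G) :=
        ⟨fun a b => Subtype.ext (by rw [Subgroup.mem_bot.mp a.2, Subgroup.mem_bot.mp b.2])⟩
      haveI hs2 : Subsingleton ↥(⊤ : Subgroup ↥(⊥ : Subgroup G)) :=
        ⟨fun a b => Subtype.ext (Subsingleton.elim _ _)⟩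
      have hbn : (⊥ : Subgroup G).Normal :=
        ⟨fun x hx g => by rw [Subgroup.mem_bot] at hx ⊢; rw [hx]; group⟩
      have htn : (⊤ : Subgroup ↥(⊥ : Subgroup G)).Normal := ⟨fun x _ g => trivial⟩
      have h1 : Nat.card ↥(⊤ : Subgroup ↥(⊥ : Subgroup G)) = 1 :=
        Nat.card_eq_one_iff_unique.mpr ⟨hs2, ⟨⟨1, trivial⟩⟩⟩
      exact ⟨⊥, hbn, ⟨⊤, htn, by rw [h1]; exact Nat.coprime_one_right p, 0,
        by rw [Subgroup.index_top, pow_zero]⟩,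
        fun a b => Subgroup.mem_bot.mpr (hnt _), fun a => Subgroup.mem_bot.mpr (hnt _)⟩


/-- If `G` is a finite supersolvable group and `p` a prime, then `G/F_p(G)` is
abelian of exponent dividing `p-1` (expressed by: all commutators and all
`(p-1)`-st powers lie in `F_p(G)`). -/
theorem quotient_pNilpotentRadical_abelian {G : Type*} [Group G] [Finite G]
    (hG : IsSupersolvable G) (p : ℕ) (hp : p.Prime) :
    (∀ x y : G, ⁅x, y⁆ ∈ pNilpotentRadical p G) ∧
      ∀ x : G, x ^ (p - 1) ∈ pNilpotentRadical p G := by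
  obtain ⟨N, hNn, hNp, hNc, hNpow⟩ := main_induction p hp (Nat.card G) G le_rfl hG
  have hle : N ≤ pNilpotentRadical p G :=
    le_iSup₂ (f := fun (N : Subgroup G) (_ : N.Normal ∧ IsPNilpotent p ↥N) => N) N ⟨hNn, hNp⟩
  exact ⟨fun x y => hle (hNc x y), fun x => hle (hNpow x)⟩
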